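/- For any two projection operators f and g on a complex Hilbert space, ‖f∘g − g∘f‖ ≤ ‖f∘g‖. -/

import Mathlib

open ContinuousLinearMap

theorem commutator_norm_upper_bound
    {H : Type*} [NormedAddCommGroup H] [InnerProductSpace ℂ H] [CompleteSpace H]
    (f g : H →L[ℂ] H)
    (hf : f ∘L f = f) (hf' : adjoint f = f)
    (hg : g ∘L g = g) (hg' : adjoint g = g) :
    ‖f ∘L g - g ∘L f‖ ≤ ‖f ∘L g‖ := by
  set K := ‖f ∘L g‖ with hK
  have hK0 : 0 ≤ K := norm_nonneg _
  -- f applied twice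
  have hff : ∀ x, f (f x) = f x := fun x => congrFun (congrArg DFunLike.coe hf) x
  -- inner product of (f u) with (v - f v) vanishes
  have horth : ∀ u v : H, (inner ℂ (f u) (v - f v) : ℂ) = 0 := by
    intro u v
    have := ContinuousLinearMap.adjoint_inner_left f (v - f v) u
    rw [hf'] at this
    rw [this]
    simp [map_sub, hff]
  -- 1 - f is a projection, its norm is ≤ 1
  have h1f : ∀ v : H, ‖v - f v‖ ≤ ‖v‖ := by
    intro v
    by_cases h0 : v - f v = 0
    · simp [h0]
    have key : ‖v - f v‖ * ‖v - f v‖ = (RCLike.re (inner ℂ (v - f v) v : ℂ)) := by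
      have expand : (inner ℂ (v - f v) (v - f v) : ℂ) = inner ℂ (v - f v) v := by
        rw [inner_sub_right]
        have : (inner ℂ (v - f v) (f v) : ℂ) = 0 := by
          rw [← inner_conj_symm]
          rw [horth v v]
          simp
        rw [this]; ring
      rw [← @inner_self_eq_norm_mul_norm ℂ, expand]
    have hb : RCLike.re (inner ℂ (v - f v) v : ℂ) ≤ ‖v - f v‖ * ‖v‖ := by
      calc RCLike.re (inner ℂ (v - f v) v : ℂ) ≤ ‖(inner ℂ (v - f v) v : ℂ)‖ :=
            RCLike.re_le_norm _
        _ ≤ ‖v - f v‖ * ‖v‖ := norm_inner_le_norm _ _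
    have hpos : 0 < ‖v - f v‖ := norm_pos_iff.mpr h0
    nlinarith [key, hb]
  -- norm of c := (1-f) ∘ g ∘ f is ≤ K
  have hcbound : ∀ w : H, ‖g (f w) - f (g (f w))‖ ≤ K * ‖f w‖ := by
    intro w
    -- g (f w) - f (g (f w)) : bound via adjoint
    -- ⟨gfw - fgfw, u⟩ = ⟨w, ... ⟩ ; instead use operator norm of c
    set c : H →L[ℂ] H := (1 - f) ∘L (g ∘L f) with hc
    have hcadj : adjoint c = (f ∘L g) ∘L (1 - f) := by
      have h1 : adjoint (1 : H →L[ℂ] H) = 1 := by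
        rw [ContinuousLinearMap.one_def, adjoint_id]
      rw [hc, adjoint_comp, adjoint_comp, hf', hg', map_sub, hf', h1,
        ContinuousLinearMap.comp_assoc]
    have hcnorm : ‖c‖ ≤ K := by
      have h1 : ‖c‖ = ‖adjoint c‖ := (LinearIsometryEquiv.norm_map _ _).symm
      rw [h1, hcadj]
      refine ContinuousLinearMap.opNorm_le_bound _ hK0 fun v => ?_
      calc ‖(f ∘L g) ((1 - f) v)‖ ≤ K * ‖(1 - f) v‖ :=
            ContinuousLinearMap.le_opNorm _ _
        _ ≤ K * ‖v‖ := by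
            apply mul_le_mul_of_nonneg_left _ hK0
            simpa using h1f v
    have hval : c (f w) = g (f w) - f (g (f w)) := by
      simp [hc, hff]
    calc ‖g (f w) - f (g (f w))‖ = ‖c (f w)‖ := by rw [hval]
      _ ≤ ‖c‖ * ‖f w‖ := ContinuousLinearMap.le_opNorm _ _
      _ ≤ K * ‖f w‖ := mul_le_mul_of_nonneg_right hcnorm (norm_nonneg _)
  refine ContinuousLinearMap.opNorm_le_bound _ hK0 fun x => ?_
  set y := f x with hy
  set z := x - f x with hz
  -- decomposition of (fg - gf) x
  have hdecomp : (f ∘L g - g ∘L f) x = f (g z) + -(g y - f (g y)) := by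
    simp only [hy, hz, ContinuousLinearMap.sub_apply, ContinuousLinearMap.comp_apply,
      map_sub]
    abel
  -- orthogonality of the two pieces
  have horth2 : (inner ℂ (f (g z)) (-(g y - f (g y))) : ℂ) = 0 := by
    rw [inner_neg_right, horth (g z) (g y)]
    simp
  have hpyth : ‖(f ∘L g - g ∘L f) x‖ ^ 2 = ‖f (g z)‖ ^ 2 + ‖g y - f (g y)‖ ^ 2 := by
    rw [hdecomp, sq, sq, sq, norm_add_sq_eq_norm_sq_add_norm_sq_of_inner_eq_zero _ _ horth2,
      norm_neg]
  -- ‖x‖² = ‖y‖² + ‖z‖²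
  have hxyz : ‖x‖ ^ 2 = ‖y‖ ^ 2 + ‖z‖ ^ 2 := by
    have hx : x = y + z := by simp [hy, hz]
    have : (inner ℂ y z : ℂ) = 0 := horth x x
    rw [hx, sq, sq, sq, norm_add_sq_eq_norm_sq_add_norm_sq_of_inner_eq_zero _ _ this]
  -- the two bounds
  have h1 : ‖f (g z)‖ ≤ K * ‖z‖ := ContinuousLinearMap.le_opNorm (f ∘L g) z
  have h2 : ‖g y - f (g y)‖ ≤ K * ‖y‖ := by
    have := hcbound x
    simpa [hy] using this
  have hsq : ‖(f ∘L g - g ∘L f) x‖ ^ 2 ≤ (K * ‖x‖) ^ 2 := by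
    rw [hpyth]
    have e1 : ‖f (g z)‖ ^ 2 ≤ (K * ‖z‖) ^ 2 := by
      apply sq_le_sq' _ h1
      nlinarith [norm_nonneg (f (g z)), mul_nonneg hK0 (norm_nonneg z)]
    have e2 : ‖g y - f (g y)‖ ^ 2 ≤ (K * ‖y‖) ^ 2 := by
      apply sq_le_sq' _ h2
      nlinarith [norm_nonneg (g y - f (g y)), mul_nonneg hK0 (norm_nonneg y)]
    have hexp : (K * ‖x‖) ^ 2 = K ^ 2 * ‖y‖ ^ 2 + K ^ 2 * ‖z‖ ^ 2 := by
      rw [mul_pow, hxyz]; ring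
    rw [hexp, mul_pow] at *
    nlinarith [e1, e2]
  nlinarith [hsq, norm_nonneg ((f ∘L g - g ∘L f) x), mul_nonneg hK0 (norm_nonneg x)]
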